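/- With the same setup as Proposition 3 (exchangeable positive joint p on subsets of {1,…,n}), define S_CCV(y_{1:n}; P) = Σ_{p=1}^P S_CV(y_{1:n}; p). Then S_CCV(y_{1:n}; P) = (1/C(n,P)) Σ_{|T|=P} log( p(y_{1:n}) / p(y_{T^c}) ), i.e., the average over all P-element test sets T of the log conditional probability of the test set given the training set. -/

import Mathlib

open Finset

private lemma key_count {n p : ℕ} (F : Finset (Fin n) → ℝ) :
    ∑ T ∈ (Finset.univ : Finset (Fin n)).powersetCard (p+1), ∑ j ∈ T, F (T.erase j)
  = ((n - p : ℕ) : ℝ) * ∑ S ∈ (Finset.univ : Finset (Fin n)).powersetCard p, F S := by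
  calc ∑ T ∈ (Finset.univ : Finset (Fin n)).powersetCard (p+1), ∑ j ∈ T, F (T.erase j)
      = ∑ x ∈ ((Finset.univ : Finset (Fin n)).powersetCard (p+1)).sigma (fun T => T),
          F (x.1.erase x.2) := Finset.sum_sigma' _ _ _
    _ = ∑ x ∈ ((Finset.univ : Finset (Fin n)).powersetCard p).sigma (fun S => Sᶜ),
          F x.1 := ?_
    _ = ∑ S ∈ (Finset.univ : Finset (Fin n)).powersetCard p, ∑ _j ∈ Sᶜ, F S :=
          by exact Finset.sum_sigma _ _ (fun x => F x.1)
    _ = ((n - p : ℕ) : ℝ) * ∑ S ∈ (Finset.univ : Finset (Fin n)).powersetCard p, F S := ?_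
  · refine Finset.sum_bij' (fun a _ => ⟨a.1.erase a.2, a.2⟩) (fun a _ => ⟨insert a.2 a.1, a.2⟩)
      ?_ ?_ ?_ ?_ ?_
    · intro a ha
      rw [Finset.mem_sigma] at ha ⊢
      obtain ⟨h1, h2⟩ := ha
      constructor
      · rw [Finset.mem_powersetCard_univ] at h1 ⊢
        rw [Finset.card_erase_of_mem h2, h1]
        omega
      · simp [h2]
    · intro a ha
      rw [Finset.mem_sigma] at ha ⊢
      obtain ⟨h1, h2⟩ := ha
      rw [Finset.mem_compl] at h2
      constructor
      · rw [Finset.mem_powersetCard_univ] at h1 ⊢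
        rw [Finset.card_insert_of_notMem h2, h1]
      · simp
    · intro a ha
      rw [Finset.mem_sigma] at ha
      simp [Finset.insert_erase ha.2]
    · intro a ha
      rw [Finset.mem_sigma] at ha
      have := Finset.mem_compl.1 ha.2
      simp [Finset.erase_insert this]
    · intro a _; rfl
  · rw [Finset.mul_sum]
    refine Finset.sum_congr rfl fun S hS => ?_
    rw [Finset.sum_const, nsmul_eq_mul]
    congr 2
    rw [Finset.card_compl, Finset.mem_powersetCard_univ.1 hS, Fintype.card_fin]

private lemma main_lemma {n : ℕ} (m : Finset (Fin n) → ℝ)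
    (hpos : ∀ S, 0 < m S) :
    ∀ P : ℕ, P ≤ n →
    ∑ p ∈ Finset.Icc 1 P, ((n.choose p : ℝ))⁻¹ *
      ∑ T ∈ (Finset.univ : Finset (Fin n)).powersetCard p, (p : ℝ)⁻¹ *
        ∑ j ∈ T, Real.log (m (insert j Tᶜ) / m Tᶜ) =
    ((n.choose P : ℝ))⁻¹ *
      ∑ T ∈ (Finset.univ : Finset (Fin n)).powersetCard P,
        Real.log (m (Finset.univ : Finset (Fin n)) / m Tᶜ) := by
  set g : Finset (Fin n) → ℝ := fun T => Real.log (m Tᶜ) with hg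
  have hlogdiv : ∀ A B : Finset (Fin n), Real.log (m A / m B)
      = Real.log (m A) - Real.log (m B) := fun A B =>
    Real.log_div (hpos A).ne' (hpos B).ne'
  have hinner : ∀ (T : Finset (Fin n)), ∀ j ∈ T,
      Real.log (m (insert j Tᶜ) / m Tᶜ) = g (T.erase j) - g T := by
    intro T j hj
    rw [hlogdiv, hg]
    simp [Finset.compl_erase]
  intro P
  induction P with
  | zero =>
    intro _
    simp only [Finset.Icc_self, Finset.sum_empty, Finset.Icc_eq_empty_of_lt Nat.zero_lt_one]
    rw [Finset.powersetCard_zero]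
    simp [Real.log_div (hpos Finset.univ).ne' (hpos Finset.univ).ne']
  | succ p ih =>
    intro hpn
    have hp' : p ≤ n := Nat.le_of_succ_le hpn
    rw [Finset.sum_Icc_succ_top (Nat.one_le_iff_ne_zero.2 (Nat.succ_ne_zero p)), ih hp']
    have hC1 : (n.choose p : ℝ) ≠ 0 := Nat.cast_ne_zero.2 (Nat.choose_pos hp').ne'
    have hC2 : (n.choose (p+1) : ℝ) ≠ 0 := Nat.cast_ne_zero.2 (Nat.choose_pos hpn).ne'
    have hrw : ∀ q : ℕ,
        ∑ T ∈ (Finset.univ : Finset (Fin n)).powersetCard q,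
          Real.log (m Finset.univ / m Tᶜ)
        = (n.choose q : ℝ) * Real.log (m Finset.univ)
          - ∑ T ∈ (Finset.univ : Finset (Fin n)).powersetCard q, g T := by
      intro q
      calc ∑ T ∈ (Finset.univ : Finset (Fin n)).powersetCard q,
            Real.log (m Finset.univ / m Tᶜ)
          = ∑ T ∈ (Finset.univ : Finset (Fin n)).powersetCard q,
            (Real.log (m Finset.univ) - g T) :=
            Finset.sum_congr rfl fun T _ => hlogdiv _ _
        _ = _ := by
            rw [Finset.sum_sub_distrib, Finset.sum_const, Finset.card_powersetCard,
              Finset.card_univ, Fintype.card_fin, nsmul_eq_mul]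
    have hcv : ∑ T ∈ (Finset.univ : Finset (Fin n)).powersetCard (p+1), ((p+1 : ℕ) : ℝ)⁻¹ *
          ∑ j ∈ T, Real.log (m (insert j Tᶜ) / m Tᶜ)
        = ((p+1 : ℕ) : ℝ)⁻¹ * (((n - p : ℕ) : ℝ) *
            (∑ S ∈ (Finset.univ : Finset (Fin n)).powersetCard p, g S)
          - ((p+1 : ℕ) : ℝ) *
            ∑ T ∈ (Finset.univ : Finset (Fin n)).powersetCard (p+1), g T) := by
      rw [← Finset.mul_sum]
      congr 1
      have h1 : ∀ T ∈ (Finset.univ : Finset (Fin n)).powersetCard (p+1),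
          ∑ j ∈ T, Real.log (m (insert j Tᶜ) / m Tᶜ)
          = (∑ j ∈ T, g (T.erase j)) - ((p+1 : ℕ) : ℝ) * g T := by
        intro T hT
        rw [Finset.mem_powersetCard_univ] at hT
        calc ∑ j ∈ T, Real.log (m (insert j Tᶜ) / m Tᶜ)
            = ∑ j ∈ T, (g (T.erase j) - g T) :=
              Finset.sum_congr rfl fun j hj => hinner T j hj
          _ = (∑ j ∈ T, g (T.erase j)) - ((p+1 : ℕ) : ℝ) * g T := by
              rw [Finset.sum_sub_distrib, Finset.sum_const, hT, nsmul_eq_mul]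
      rw [Finset.sum_congr rfl h1, Finset.sum_sub_distrib, key_count, ← Finset.mul_sum]
    rw [hcv, hrw, hrw]
    have hbin : (n.choose (p+1) : ℝ) * ((p+1 : ℕ) : ℝ) = (n.choose p : ℝ) * ((n - p : ℕ) : ℝ) := by
      exact_mod_cast congrArg (Nat.cast : ℕ → ℝ) (Nat.choose_succ_right_eq n p)
    have hp1 : ((p+1 : ℕ) : ℝ) ≠ 0 := Nat.cast_ne_zero.2 (Nat.succ_ne_zero p)
    set G := ∑ S ∈ (Finset.univ : Finset (Fin n)).powersetCard p, g S with hG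
    set H := ∑ T ∈ (Finset.univ : Finset (Fin n)).powersetCard (p+1), g T with hH
    have hsub : ((n - p : ℕ) : ℝ) = (n : ℝ) - (p : ℝ) := by
      rw [Nat.cast_sub hp']
    rw [hsub] at hbin ⊢
    push_cast at hbin ⊢
    field_simp
    linear_combination (-G) * hbin

/-- Corollary (Supplementary) of Fong & Holmes: the cumulative cross-validation score
`S_CCV(y_{1:n}; P) = Σ_{p=1}^P S_CV(y_{1:n}; p)` equals the average over all
`P`-element test sets `T` of the log conditional probability
`log (p(y_{1:n}) / p(y_{T^c}))` of the test set given the training set. -/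
theorem stmt6 {Y : Type*} (n : ℕ) (y : Fin n → Y)
    (m : Finset (Fin n) → ℝ)
    (hpos : ∀ S, 0 < m S)
    (hempty : m ∅ = 1)
    (hexch : ∀ S S' : Finset (Fin n), S.val.map y = S'.val.map y → m S = m S')
    (P : ℕ) (hP1 : 1 ≤ P) (hP2 : P ≤ n - 1) :
    ∑ p ∈ Finset.Icc 1 P, ((n.choose p : ℝ))⁻¹ *
      ∑ T ∈ (Finset.univ : Finset (Fin n)).powersetCard p, (p : ℝ)⁻¹ *
        ∑ j ∈ T, Real.log (m (insert j Tᶜ) / m Tᶜ) =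
    ((n.choose P : ℝ))⁻¹ *
      ∑ T ∈ (Finset.univ : Finset (Fin n)).powersetCard P,
        Real.log (m (Finset.univ : Finset (Fin n)) / m Tᶜ) := by
  exact main_lemma m hpos P (le_trans hP2 (Nat.sub_le n 1))
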